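/- For p ≥ 3 and q = 2, the kernel of the k-algebra homomorphism φ: k[e_1,...,e_{2p}] → k[u_1,...,u_p,α] given by φ(e_i) = u_i for 1 ≤ i ≤ p-1, φ(e_p) = u_p + α, and φ(e_{p+i}) = u_i α for 1 ≤ i ≤ p, equals the elimination ideal ⟨f_0, f_1, ..., f_{p-1}⟩ ∩ k[e_1,...,e_{2p}], where f_0 = t² + e_p t + e_{2p} and f_i = e_i t + e_{p+i} for 1 ≤ i ≤ p-1 are polynomials in k[e_1,...,e_{2p}][t]. -/

import Mathlib

noncomputable def phiMap (k : Type*) [Field k] (p : ℕ) :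
    MvPolynomial (Fin (2 * p)) k →ₐ[k] MvPolynomial (Fin (p + 1)) k :=
  MvPolynomial.aeval fun i : Fin (2 * p) =>
    if h : (i : ℕ) < p - 1 then MvPolynomial.X ⟨(i : ℕ), by omega⟩
    else if h2 : (i : ℕ) = p - 1 then
      MvPolynomial.X ⟨p - 1, by omega⟩ + MvPolynomial.X ⟨p, by omega⟩
    else MvPolynomial.X ⟨(i : ℕ) - p, by have := i.isLt; omega⟩ * MvPolynomial.X ⟨p, by omega⟩

noncomputable def q2Gens (k : Type*) [Field k] (p : ℕ) (hp : 3 ≤ p) :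
    Set (Polynomial (MvPolynomial (Fin (2 * p)) k)) :=
  insert
    (Polynomial.X ^ 2 +
      Polynomial.C (MvPolynomial.X ⟨p - 1, by omega⟩) * Polynomial.X +
      Polynomial.C (MvPolynomial.X ⟨2 * p - 1, by omega⟩))
    {g | ∃ j : Fin (p - 1),
      g = Polynomial.C (MvPolynomial.X (⟨(j : ℕ), by have := j.isLt; omega⟩ : Fin (2 * p))) *
            Polynomial.X +
          Polynomial.C (MvPolynomial.X (⟨p + (j : ℕ), by have := j.isLt; omega⟩ : Fin (2 * p)))}

section Aux

open MvPolynomial Polynomial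

variable (k : Type*) [Field k] (p : ℕ)

/-- `ψ : k[e][t] → k[u,α]`, extending `φ` by `t ↦ -α`. -/
noncomputable def psiMap (hp : 3 ≤ p) : Polynomial (MvPolynomial (Fin (2 * p)) k) →ₐ[k]
    MvPolynomial (Fin (p + 1)) k :=
  Polynomial.aevalTower (phiMap k p) (-(MvPolynomial.X ⟨p, by omega⟩))

/-- `θ : k[u,α] → k[e][t]`, with `u_j ↦ e_j` (j < p), `u_p ↦ e_p + t`, `α ↦ -t`. -/
noncomputable def thetaMap (hp : 3 ≤ p) : MvPolynomial (Fin (p + 1)) k →ₐ[k]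
    Polynomial (MvPolynomial (Fin (2 * p)) k) :=
  MvPolynomial.aeval fun j : Fin (p + 1) =>
    if h : (j : ℕ) < p - 1 then Polynomial.C (MvPolynomial.X ⟨(j : ℕ), by omega⟩)
    else if h2 : (j : ℕ) = p - 1 then
      Polynomial.C (MvPolynomial.X ⟨p - 1, by omega⟩) + Polynomial.X
    else -Polynomial.X

noncomputable def rhoMap (hp : 3 ≤ p) : Polynomial (MvPolynomial (Fin (2 * p)) k) →ₐ[k]
    Polynomial (MvPolynomial (Fin (2 * p)) k) :=
  (thetaMap k p hp).comp (psiMap k p hp)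

lemma psi_C (hp : 3 ≤ p) (a : MvPolynomial (Fin (2 * p)) k) :
    psiMap k p hp (Polynomial.C a) = phiMap k p a :=
  Polynomial.aevalTower_C _ _ _

lemma psi_X (hp : 3 ≤ p) :
    psiMap k p hp Polynomial.X = -(MvPolynomial.X ⟨p, by omega⟩) :=
  Polynomial.aevalTower_X _ _

lemma phi_X_lt (i : Fin (2 * p)) (h : (i : ℕ) < p - 1) :
    phiMap k p (MvPolynomial.X i) = MvPolynomial.X ⟨(i : ℕ), by omega⟩ := by
  unfold phiMap; rw [MvPolynomial.aeval_X, dif_pos h]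

lemma phi_X_eq (i : Fin (2 * p)) (h : (i : ℕ) = p - 1) :
    phiMap k p (MvPolynomial.X i) =
      MvPolynomial.X ⟨p - 1, by have := i.isLt; omega⟩ +
        MvPolynomial.X ⟨p, by have := i.isLt; omega⟩ := by
  unfold phiMap; rw [MvPolynomial.aeval_X, dif_neg (by omega), dif_pos h]

lemma phi_X_gt (i : Fin (2 * p)) (h : p - 1 < (i : ℕ)) :
    phiMap k p (MvPolynomial.X i) =
      MvPolynomial.X ⟨(i : ℕ) - p, by have := i.isLt; omega⟩ *
        MvPolynomial.X ⟨p, by have := i.isLt; omega⟩ := by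
  unfold phiMap; rw [MvPolynomial.aeval_X, dif_neg (by omega), dif_neg (by omega)]

lemma theta_X_lt (hp : 3 ≤ p) (j : Fin (p + 1)) (h : (j : ℕ) < p - 1) :
    thetaMap k p hp (MvPolynomial.X j) = Polynomial.C (MvPolynomial.X ⟨(j : ℕ), by omega⟩) := by
  unfold thetaMap; rw [MvPolynomial.aeval_X, dif_pos h]

lemma theta_X_eq (hp : 3 ≤ p) (j : Fin (p + 1)) (h : (j : ℕ) = p - 1) :
    thetaMap k p hp (MvPolynomial.X j) =
      Polynomial.C (MvPolynomial.X ⟨p - 1, by omega⟩) + Polynomial.X := by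
  unfold thetaMap; rw [MvPolynomial.aeval_X, dif_neg (by omega), dif_pos h]

lemma theta_X_gt (hp : 3 ≤ p) (j : Fin (p + 1)) (h : p - 1 < (j : ℕ)) :
    thetaMap k p hp (MvPolynomial.X j) = -Polynomial.X := by
  unfold thetaMap; rw [MvPolynomial.aeval_X, dif_neg (by omega), dif_neg (by omega)]

lemma rho_X (hp : 3 ≤ p) : rhoMap k p hp Polynomial.X = Polynomial.X := by
  rw [rhoMap, AlgHom.comp_apply, psi_X, map_neg,
    theta_X_gt k p hp ⟨p, by omega⟩ (by show p - 1 < p; omega), neg_neg]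

/-- Membership of the key differences in the span, for each variable. -/
lemma sub_rho_X_mem (hp : 3 ≤ p) (i : Fin (2 * p)) :
    Polynomial.C (MvPolynomial.X i) - rhoMap k p hp (Polynomial.C (MvPolynomial.X i)) ∈
      Ideal.span (q2Gens k p hp) := by
  have hrho : rhoMap k p hp (Polynomial.C (MvPolynomial.X i)) =
      thetaMap k p hp (phiMap k p (MvPolynomial.X i)) := by
    rw [rhoMap, AlgHom.comp_apply, psi_C]
  rw [hrho]
  rcases lt_trichotomy (i : ℕ) (p - 1) with h | h | h
  · rw [phi_X_lt k p i h, theta_X_lt k p hp ⟨(i : ℕ), by omega⟩ h]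
    have hXi : (MvPolynomial.X i : MvPolynomial (Fin (2 * p)) k) =
        MvPolynomial.X ⟨((⟨(i : ℕ), by omega⟩ : Fin (p + 1)) : ℕ), by have := i.isLt; omega⟩ :=
      congrArg _ (Fin.ext rfl)
    rw [hXi, sub_self]
    exact Ideal.zero_mem _
  · rw [phi_X_eq k p i h, map_add, theta_X_eq k p hp ⟨p - 1, by omega⟩ rfl,
      theta_X_gt k p hp ⟨p, by omega⟩ (by show p - 1 < p; omega)]
    have hXi : (MvPolynomial.X i : MvPolynomial (Fin (2 * p)) k) =
        MvPolynomial.X ⟨p - 1, by omega⟩ :=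
      congrArg _ (Fin.ext h)
    have hz : Polynomial.C (MvPolynomial.X (⟨p - 1, by omega⟩ : Fin (2 * p)) :
          MvPolynomial (Fin (2 * p)) k) -
        (Polynomial.C (MvPolynomial.X (⟨p - 1, by omega⟩ : Fin (2 * p))) + Polynomial.X +
          -(Polynomial.X : Polynomial (MvPolynomial (Fin (2 * p)) k))) = 0 := by ring
    rw [hXi, hz]
    exact Ideal.zero_mem _
  · rw [phi_X_gt k p i h, map_mul,
      theta_X_gt k p hp ⟨p, by omega⟩ (by show p - 1 < p; omega)]
    have hip : p ≤ (i : ℕ) := by omega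
    rcases lt_or_ge ((i : ℕ) - p) (p - 1) with h2 | h2
    · rw [theta_X_lt k p hp ⟨(i : ℕ) - p, by have := i.isLt; omega⟩ h2]
      have hXi : (MvPolynomial.X i : MvPolynomial (Fin (2 * p)) k) =
          MvPolynomial.X ⟨p + ((i : ℕ) - p), by omega⟩ :=
        congrArg _ (Fin.ext (by show (i : ℕ) = p + ((i : ℕ) - p); omega))
      have heq : Polynomial.C (MvPolynomial.X (⟨p + ((i : ℕ) - p), by omega⟩ : Fin (2 * p)) :
            MvPolynomial (Fin (2 * p)) k) -
          Polynomial.C (MvPolynomial.X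
              (⟨((⟨(i : ℕ) - p, by omega⟩ : Fin (p + 1)) : ℕ), by simp; omega⟩ : Fin (2 * p))) *
            -(Polynomial.X : Polynomial (MvPolynomial (Fin (2 * p)) k)) =
          Polynomial.C (MvPolynomial.X
              (⟨((⟨(i : ℕ) - p, by omega⟩ : Fin (p + 1)) : ℕ), by simp; omega⟩ : Fin (2 * p))) *
            Polynomial.X +
          Polynomial.C (MvPolynomial.X (⟨p + ((i : ℕ) - p), by omega⟩ : Fin (2 * p))) := by
        ring
      rw [hXi, heq]
      refine Ideal.subset_span (Set.mem_insert_iff.2 (Or.inr ⟨⟨(i : ℕ) - p, h2⟩, ?_⟩))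
      rfl
    · -- here i = 2p - 1
      have hi : (i : ℕ) = 2 * p - 1 := by have := i.isLt; omega
      rw [theta_X_eq k p hp ⟨(i : ℕ) - p, by have := i.isLt; omega⟩
        (by show (i : ℕ) - p = p - 1; omega)]
      have hXi : (MvPolynomial.X i : MvPolynomial (Fin (2 * p)) k) =
          MvPolynomial.X ⟨2 * p - 1, by omega⟩ :=
        congrArg _ (Fin.ext hi)
      have heq : Polynomial.C (MvPolynomial.X (⟨2 * p - 1, by omega⟩ : Fin (2 * p)) :
            MvPolynomial (Fin (2 * p)) k) -
          (Polynomial.C (MvPolynomial.X (⟨p - 1, by omega⟩ : Fin (2 * p))) + Polynomial.X) *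
            -(Polynomial.X : Polynomial (MvPolynomial (Fin (2 * p)) k)) =
          Polynomial.X ^ 2 +
            Polynomial.C (MvPolynomial.X (⟨p - 1, by omega⟩ : Fin (2 * p))) * Polynomial.X +
            Polynomial.C (MvPolynomial.X (⟨2 * p - 1, by omega⟩ : Fin (2 * p))) := by
        ring
      rw [hXi, heq]
      exact Ideal.subset_span (Set.mem_insert _ _)

lemma sub_rho_mem (hp : 3 ≤ p) (F : Polynomial (MvPolynomial (Fin (2 * p)) k)) :
    F - rhoMap k p hp F ∈ Ideal.span (q2Gens k p hp) := by
  set J := Ideal.span (q2Gens k p hp) with hJ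
  set ρ := rhoMap k p hp with hρ
  have hmul : ∀ a b : Polynomial (MvPolynomial (Fin (2 * p)) k),
      a - ρ a ∈ J → b - ρ b ∈ J → a * b - ρ (a * b) ∈ J := by
    intro a b ha hb
    have : a * b - ρ (a * b) = a * (b - ρ b) + (a - ρ a) * ρ b := by
      rw [map_mul]; ring
    rw [this]
    exact J.add_mem (J.mul_mem_left _ hb) (J.mul_mem_right _ ha)
  have hC : ∀ a : MvPolynomial (Fin (2 * p)) k,
      Polynomial.C a - ρ (Polynomial.C a) ∈ J := by
    intro a
    induction a using MvPolynomial.induction_on with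
    | C r =>
        have : (Polynomial.C (MvPolynomial.C r) : Polynomial (MvPolynomial (Fin (2 * p)) k)) =
            algebraMap k _ r := rfl
        rw [this, AlgHom.commutes, sub_self]
        exact J.zero_mem
    | add f g hf hg =>
        have : Polynomial.C (f + g) - ρ (Polynomial.C (f + g)) =
            (Polynomial.C f - ρ (Polynomial.C f)) + (Polynomial.C g - ρ (Polynomial.C g)) := by
          rw [map_add, map_add]; ring
        rw [this]; exact J.add_mem hf hg
    | mul_X f i hf =>
        rw [map_mul]
        exact hmul _ _ hf (sub_rho_X_mem k p hp i)
  induction F using Polynomial.induction_on with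
  | C a => exact hC a
  | add f g hf hg =>
      have : f + g - ρ (f + g) = (f - ρ f) + (g - ρ g) := by rw [map_add]; ring
      rw [this]; exact J.add_mem hf hg
  | monomial n a hf =>
      have : Polynomial.C a * Polynomial.X ^ (n + 1) =
          (Polynomial.C a * Polynomial.X ^ n) * Polynomial.X := by ring
      rw [this]
      refine hmul _ _ hf ?_
      rw [rho_X, sub_self]
      exact J.zero_mem

lemma gens_subset_ker (hp : 3 ≤ p) :
    Ideal.span (q2Gens k p hp) ≤ RingHom.ker (psiMap k p hp) := by
  rw [Ideal.span_le]
  rintro g (rfl | ⟨j, rfl⟩) <;> rw [SetLike.mem_coe, RingHom.mem_ker]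
  · rw [map_add, map_add, map_pow, map_mul, psi_X, psi_C, psi_C,
      phi_X_eq k p ⟨p - 1, by omega⟩ rfl,
      phi_X_gt k p ⟨2 * p - 1, by omega⟩ (by show p - 1 < 2 * p - 1; omega)]
    have h2 : (MvPolynomial.X (⟨((⟨2 * p - 1, by omega⟩ : Fin (2 * p)) : ℕ) - p,
          by omega⟩ : Fin (p + 1)) : MvPolynomial (Fin (p + 1)) k) =
        MvPolynomial.X ⟨p - 1, by omega⟩ :=
      congrArg _ (Fin.ext (by show 2 * p - 1 - p = p - 1; omega))
    rw [h2]
    ring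
  · rw [map_add, map_mul, psi_X, psi_C, psi_C,
      phi_X_lt k p ⟨(j : ℕ), by have := j.isLt; omega⟩ (by show (j : ℕ) < p - 1; exact j.isLt),
      phi_X_gt k p ⟨p + (j : ℕ), by have := j.isLt; omega⟩
        (by show p - 1 < p + (j : ℕ); omega)]
    have h2 : (MvPolynomial.X (⟨((⟨p + (j : ℕ), by have := j.isLt; omega⟩ : Fin (2 * p)) : ℕ) - p,
          by omega⟩ : Fin (p + 1)) : MvPolynomial (Fin (p + 1)) k) =
        MvPolynomial.X ⟨(j : ℕ), by have := j.isLt; omega⟩ :=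
      congrArg _ (Fin.ext (by show p + (j : ℕ) - p = (j : ℕ); omega))
    rw [h2]
    ring

end Aux

theorem stmt5 (k : Type*) [Field k] [IsAlgClosed k] (p : ℕ) (hp : 3 ≤ p) :
    RingHom.ker (phiMap k p) =
      Ideal.comap (Polynomial.C : MvPolynomial (Fin (2 * p)) k →+*
          Polynomial (MvPolynomial (Fin (2 * p)) k))
        (Ideal.span (q2Gens k p hp)) := by
  ext g
  rw [RingHom.mem_ker, Ideal.mem_comap]
  constructor
  · intro hg
    have h0 : psiMap k p hp (Polynomial.C g) = 0 := by rw [psi_C, hg]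
    have h1 : rhoMap k p hp (Polynomial.C g) = 0 := by
      rw [rhoMap, AlgHom.comp_apply, h0, map_zero]
    have h2 := sub_rho_mem k p hp (Polynomial.C g)
    rwa [h1, sub_zero] at h2
  · intro hg
    have h := gens_subset_ker k p hp hg
    rw [RingHom.mem_ker, psi_C] at h
    exact h
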